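/- arXiv:1712.00410 — 2 statements merged into one kernel-verified Lean document; each statement's English description precedes it below -/
import Mathlib

section
/- For every finite nonempty set A of real numbers, the number of triples (d,d',d'') ∈ (A−A)³ with d'' = d − d' is at least |A|⁶ / E₃(A). -/
open Finset Pointwise

/-- `rD A x` is the number of pairs `(a,b) ∈ A × A` with `a - b = x`. -/
noncomputable def rD (A : Finset ℝ) (x : ℝ) : ℕ :=
  ((A ×ˢ A).filter (fun q => q.1 - q.2 = x)).card

/-- The cubic energy `E₃(A) = Σ_x r_{A−A}(x)³` (only `x ∈ A - A` contribute). -/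
noncomputable def E3c (A : Finset ℝ) : ℕ :=
  ∑ x ∈ A - A, rD A x ^ 3

namespace TDaux

variable (A : Finset ℝ)

noncomputable def r3 (q : ℝ × ℝ) : ℕ :=
  (A.filter (fun b => b + q.1 ∈ A ∧ b + q.2 ∈ A)).card

noncomputable def T : Finset ((ℝ × ℝ) × ℝ) :=
  (((A - A) ×ˢ (A - A)) ×ˢ (A - A)).filter (fun t => t.2 = t.1.1 - t.1.2)

def φ (p : ℝ × ℝ × ℝ) : (ℝ × ℝ) × ℝ := ((p.1 - p.2.1, p.2.2 - p.2.1), p.1 - p.2.2)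

lemma maps_to : ∀ p ∈ A ×ˢ A ×ˢ A, φ p ∈ T A := by
  rintro ⟨a, b, c⟩ hp
  simp only [mem_product] at hp
  obtain ⟨ha, hb, hc⟩ := hp
  simp only [T, φ, mem_filter, mem_product]
  exact ⟨⟨⟨sub_mem_sub ha hb, sub_mem_sub hc hb⟩, sub_mem_sub ha hc⟩, by ring⟩

noncomputable def g (t : (ℝ × ℝ) × ℝ) : ℕ :=
  ((A ×ˢ A ×ˢ A).filter (fun p => φ p = t)).card

lemma sum_g : ∑ t ∈ T A, g A t = A.card ^ 3 := by
  have := (card_eq_sum_card_fiberwise (maps_to A)).symm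
  simpa [g, card_product, pow_succ, mul_assoc] using this

lemma g_le (t : (ℝ × ℝ) × ℝ) : g A t ≤ r3 A t.1 := by
  obtain ⟨⟨d, d'⟩, d''⟩ := t
  apply card_le_card_of_injOn (fun p => p.2.1)
  · rintro ⟨a, b, c⟩ hp
    simp only [mem_coe, mem_filter, mem_product, φ, Prod.mk.injEq] at hp
    obtain ⟨⟨ha, hb, hc⟩, ⟨h1, h2⟩, h3⟩ := hp
    simp only [r3, mem_coe, mem_filter]
    refine ⟨hb, ?_, ?_⟩
    · rw [← h1]; simpa using ha
    · rw [← h2]; simpa using hc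
  · rintro ⟨a, b, c⟩ hp ⟨a', b', c'⟩ hp' h
    simp only [coe_filter, Set.mem_setOf_eq, mem_product, φ, Prod.mk.injEq] at hp hp'
    obtain ⟨-, ⟨h1, h2⟩, -⟩ := hp
    obtain ⟨-, ⟨h1', h2'⟩, -⟩ := hp'
    simp only at h
    refine Prod.ext ?_ (Prod.ext h ?_)
    · simp only; linarith [h1.trans h1'.symm]
    · simp only; linarith [h2.trans h2'.symm]

lemma sum_r3_sq_le :
    ∑ t ∈ T A, r3 A t.1 ^ 2 ≤ ∑ q ∈ (A - A) ×ˢ (A - A), r3 A q ^ 2 := by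
  have hinj : ∀ t ∈ T A, ∀ t' ∈ T A, Prod.fst t = Prod.fst t' → t = t' := by
    rintro t ht t' ht' h
    simp only [T, mem_filter] at ht ht'
    exact Prod.ext h (by rw [ht.2, ht'.2, h])
  rw [← sum_image (f := fun q => r3 A q ^ 2) hinj]
  apply sum_le_sum_of_subset
  intro q hq
  obtain ⟨t, ht, rfl⟩ := mem_image.mp hq
  simp only [T, mem_filter, mem_product] at ht
  exact mem_product.mpr ht.1.1

noncomputable def cc (b b' : ℝ) : ℕ :=
  ((A - A).filter (fun d => b + d ∈ A ∧ b' + d ∈ A)).card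

lemma cc_eq {b b' : ℝ} (hb : b ∈ A) (hb' : b' ∈ A) : cc A b b' = rD A (b - b') := by
  apply card_nbij' (fun d => (b + d, b' + d)) (fun q => q.1 - b)
  · intro d hd
    simp only [mem_coe, mem_filter] at hd ⊢
    exact ⟨mem_product.mpr ⟨hd.2.1, hd.2.2⟩, by ring⟩
  · intro q hq
    simp only [mem_coe, mem_filter] at hq ⊢
    obtain ⟨hq1, hq2⟩ := hq
    rw [mem_product] at hq1
    refine ⟨sub_mem_sub hq1.1 hb, by simpa using hq1.1, ?_⟩
    have : b' + (q.1 - b) = q.2 := by linarith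
    rw [this]; exact hq1.2
  · intro d hd; simp
  · intro q hq
    simp only [mem_coe, mem_filter, mem_product] at hq
    have : b' + (q.1 - b) = q.2 := by linarith [hq.2]
    simp [this]

end TDaux

namespace TDaux

lemma step1 (A : Finset ℝ) :
    ∑ q ∈ (A - A) ×ˢ (A - A), r3 A q ^ 2
      = ∑ q ∈ (A - A) ×ˢ (A - A), ∑ p ∈ A ×ˢ A,
          (if p.1 + q.1 ∈ A ∧ p.1 + q.2 ∈ A then 1 else 0) *
          (if p.2 + q.1 ∈ A ∧ p.2 + q.2 ∈ A then (1:ℕ) else 0) := by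
  refine sum_congr rfl fun q _ => ?_
  rw [sq, r3, card_filter, sum_mul_sum, sum_product]

lemma step3 (A : Finset ℝ) (p : ℝ × ℝ) :
    (∑ q ∈ (A - A) ×ˢ (A - A),
          (if p.1 + q.1 ∈ A ∧ p.1 + q.2 ∈ A then 1 else 0) *
          (if p.2 + q.1 ∈ A ∧ p.2 + q.2 ∈ A then (1:ℕ) else 0))
      = cc A p.1 p.2 ^ 2 := by
  rw [sq, cc, card_filter, sum_mul_sum, sum_product]
  refine sum_congr rfl fun d _ => sum_congr rfl fun d' _ => ?_
  have h1 : ∀ (P Q : Prop) [Decidable P] [Decidable Q],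
      (if P then 1 else 0) * (if Q then (1:ℕ) else 0) = if P ∧ Q then 1 else 0 := by
    intro P Q _ _; split_ifs <;> simp_all
  rw [h1, h1]
  exact if_congr (by tauto) rfl rfl

lemma sum_r3_sq_eq (A : Finset ℝ) :
    ∑ q ∈ (A - A) ×ˢ (A - A), r3 A q ^ 2 = E3c A := by
  rw [step1, sum_comm]
  calc ∑ p ∈ A ×ˢ A, ∑ q ∈ (A - A) ×ˢ (A - A),
          (if p.1 + q.1 ∈ A ∧ p.1 + q.2 ∈ A then 1 else 0) *
          (if p.2 + q.1 ∈ A ∧ p.2 + q.2 ∈ A then (1:ℕ) else 0)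
      = ∑ p ∈ A ×ˢ A, rD A (p.1 - p.2) ^ 2 := by
        refine sum_congr rfl fun p hp => ?_
        rw [mem_product] at hp
        rw [step3, cc_eq A hp.1 hp.2]
    _ = ∑ x ∈ A - A, ∑ p ∈ (A ×ˢ A).filter (fun p => p.1 - p.2 = x),
          rD A (p.1 - p.2) ^ 2 := by
        rw [sum_fiberwise_of_maps_to]
        intro p hp
        rw [mem_product] at hp
        exact sub_mem_sub hp.1 hp.2
    _ = E3c A := by
        refine sum_congr rfl fun x hx => ?_
        rw [sum_congr rfl (fun p hp => by rw [(mem_filter.mp hp).2]),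
          sum_const, smul_eq_mul]
        have : ((A ×ˢ A).filter (fun p => p.1 - p.2 = x)).card = rD A x := rfl
        rw [this, ← pow_succ']

end TDaux

lemma E3c_pos (A : Finset ℝ) (hA : A.Nonempty) : 0 < E3c A := by
  obtain ⟨a, ha⟩ := hA
  have h0 : (0:ℝ) ∈ A - A := by simpa using sub_mem_sub ha ha
  have hr : 0 < rD A 0 := by
    rw [rD]
    apply card_pos.mpr
    exact ⟨(a, a), by simp [ha]⟩
  calc 0 < rD A 0 ^ 3 := by positivity
    _ ≤ E3c A := by
      rw [E3c]
      exact Finset.single_le_sum (f := fun x => rD A x ^ 3) (fun x _ => Nat.zero_le _) h0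

theorem triple_differences_vs_E3 (A : Finset ℝ) (hA : A.Nonempty) :
    (A.card : ℝ) ^ 6 / (E3c A : ℝ) ≤
      (((((A - A) ×ˢ (A - A)) ×ˢ (A - A)).filter
          (fun t => t.2 = t.1.1 - t.1.2)).card : ℝ) := by
  have hE : (0:ℝ) < (E3c A : ℝ) := by exact_mod_cast E3c_pos A hA
  rw [div_le_iff₀ hE]
  have hCS : (∑ t ∈ TDaux.T A, (TDaux.g A t : ℝ)) ^ 2
      ≤ (TDaux.T A).card * ∑ t ∈ TDaux.T A, (TDaux.g A t : ℝ) ^ 2 :=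
    sq_sum_le_card_mul_sum_sq
  have h1 : (∑ t ∈ TDaux.T A, (TDaux.g A t : ℝ)) = (A.card : ℝ) ^ 3 := by
    rw [← Nat.cast_sum, TDaux.sum_g]; push_cast; ring
  have h2 : (∑ t ∈ TDaux.T A, (TDaux.g A t : ℝ) ^ 2) ≤ (E3c A : ℝ) := by
    have hn : ∑ t ∈ TDaux.T A, TDaux.g A t ^ 2 ≤ E3c A := by
      calc ∑ t ∈ TDaux.T A, TDaux.g A t ^ 2
          ≤ ∑ t ∈ TDaux.T A, TDaux.r3 A t.1 ^ 2 :=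
            Finset.sum_le_sum fun t _ => Nat.pow_le_pow_left (TDaux.g_le A t) 2
        _ ≤ ∑ q ∈ (A - A) ×ˢ (A - A), TDaux.r3 A q ^ 2 := TDaux.sum_r3_sq_le A
        _ = E3c A := TDaux.sum_r3_sq_eq A
    calc (∑ t ∈ TDaux.T A, (TDaux.g A t : ℝ) ^ 2)
        = ((∑ t ∈ TDaux.T A, TDaux.g A t ^ 2 : ℕ) : ℝ) := by push_cast; ring
      _ ≤ (E3c A : ℝ) := by exact_mod_cast hn
  have hTcard : ((TDaux.T A).card : ℝ)
      = (((((A - A) ×ˢ (A - A)) ×ˢ (A - A)).filter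
          (fun t => t.2 = t.1.1 - t.1.2)).card : ℝ) := rfl
  calc (A.card : ℝ) ^ 6 = ((∑ t ∈ TDaux.T A, (TDaux.g A t : ℝ)) ) ^ 2 := by
        rw [h1]; ring
    _ ≤ (TDaux.T A).card * ∑ t ∈ TDaux.T A, (TDaux.g A t : ℝ) ^ 2 := hCS
    _ ≤ (TDaux.T A).card * (E3c A : ℝ) := by
        apply mul_le_mul_of_nonneg_left h2 (by positivity)
    _ = _ := by rw [hTcard]
end

section
/- Let A be a finite nonempty set of real numbers and let P = {d ∈ A−A : r_{A−A}(d) ≥ |A|²/(2|A−A|)}. Then |A|⁶/4 ≤ E₃(A) · |{(d,d',d'') ∈ (A−A) × P × (A−A) : d'' = d − d'}|. -/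
open Finset Pointwise

lemma sum_rD_eq (A : Finset ℝ) : ∑ d ∈ A - A, rD A d = A.card ^ 2 := by
  rw [sq, ← Finset.card_product]
  exact (Finset.card_eq_sum_card_fiberwise (fun q hq =>
    Finset.sub_mem_sub (Finset.mem_product.1 hq).1 (Finset.mem_product.1 hq).2)).symm

lemma Qcard (A P : Finset ℝ) (hPD : P ⊆ A - A) :
    ((A ×ˢ A).filter (fun q => q.1 - q.2 ∈ P)).card = ∑ d ∈ P, rD A d := by
  have h := Finset.card_eq_sum_card_fiberwise
    (s := (A ×ˢ A).filter (fun q => q.1 - q.2 ∈ P)) (t := P) (f := fun q => q.1 - q.2)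
    (fun q hq => (Finset.mem_filter.1 hq).2)
  rw [h]
  refine Finset.sum_congr rfl fun d hd => ?_
  unfold rD
  rw [Finset.filter_filter]
  congr 1
  apply Finset.filter_congr
  intro q hq
  constructor
  · exact fun h => h.2
  · exact fun h => ⟨h ▸ hd, h⟩

lemma popular_sum (A : Finset ℝ) (hA : A.Nonempty) (P : Finset ℝ)
    (hP : P = (A - A).filter
      (fun d => (A.card : ℝ) ^ 2 / (2 * ((A - A).card : ℝ)) ≤ (rD A d : ℝ))) :
    (A.card : ℝ) ^ 2 / 2 ≤ ∑ d ∈ P, (rD A d : ℝ) := by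
  have hD : (A - A).Nonempty := hA.sub hA
  have hm : (0:ℝ) < ((A - A).card : ℝ) := by exact_mod_cast Finset.card_pos.2 hD
  have htot : ∑ d ∈ A - A, (rD A d : ℝ) = (A.card : ℝ) ^ 2 := by
    rw [← Nat.cast_sum, sum_rD_eq]; push_cast; ring
  have hsplit := Finset.sum_filter_add_sum_filter_not (A - A)
    (fun d => (A.card : ℝ) ^ 2 / (2 * ((A - A).card : ℝ)) ≤ (rD A d : ℝ))
    (fun d => (rD A d : ℝ))
  have hsmall : ∑ d ∈ (A - A).filter
      (fun d => ¬ ((A.card : ℝ) ^ 2 / (2 * ((A - A).card : ℝ)) ≤ (rD A d : ℝ))),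
      (rD A d : ℝ) ≤ (A.card : ℝ) ^ 2 / 2 := by
    have hB : (0:ℝ) ≤ (A.card : ℝ) ^ 2 / (2 * ((A - A).card : ℝ)) := by positivity
    calc ∑ d ∈ ((A - A).filter
        (fun d => ¬ ((A.card : ℝ) ^ 2 / (2 * ((A - A).card : ℝ)) ≤ (rD A d : ℝ)))),
        (rD A d : ℝ)
        ≤ ∑ d ∈ ((A - A).filter
          (fun d => ¬ ((A.card : ℝ) ^ 2 / (2 * ((A - A).card : ℝ)) ≤ (rD A d : ℝ)))),
          (A.card : ℝ) ^ 2 / (2 * ((A - A).card : ℝ)) := by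
          refine Finset.sum_le_sum fun d hd => ?_
          exact le_of_lt (not_le.1 (Finset.mem_filter.1 hd).2)
      _ = (((A - A).filter
          (fun d => ¬ ((A.card : ℝ) ^ 2 / (2 * ((A - A).card : ℝ)) ≤ (rD A d : ℝ)))).card : ℝ) *
          ((A.card : ℝ) ^ 2 / (2 * ((A - A).card : ℝ))) := by
          rw [Finset.sum_const, nsmul_eq_mul]
      _ ≤ ((A - A).card : ℝ) * ((A.card : ℝ) ^ 2 / (2 * ((A - A).card : ℝ))) := by
          gcongr
          exact Finset.filter_subset _ _
      _ = (A.card : ℝ) ^ 2 / 2 := by field_simp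
  rw [hP]
  linarith [hsplit, htot.symm ▸ hsplit]

theorem popular_triple_differences (A : Finset ℝ) (hA : A.Nonempty)
    (P : Finset ℝ)
    (hP : P = (A - A).filter
      (fun d => (A.card : ℝ) ^ 2 / (2 * ((A - A).card : ℝ)) ≤ (rD A d : ℝ))) :
    (A.card : ℝ) ^ 6 / 4 ≤
      (E3c A : ℝ) *
        (((((A - A) ×ˢ P) ×ˢ (A - A)).filter
            (fun t => t.2 = t.1.1 - t.1.2)).card : ℝ) := by
  classical
  set T := ((((A - A) ×ˢ P) ×ˢ (A - A)).filter (fun t => t.2 = t.1.1 - t.1.2)) with hT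
  set Q := (A ×ˢ A).filter (fun q => q.1 - q.2 ∈ P) with hQ
  set S := Q ×ˢ A with hSdef
  set g : (ℝ × ℝ) × ℝ → (ℝ × ℝ) × ℝ :=
    fun s => ((s.1.1 - s.2, s.1.1 - s.1.2), s.1.2 - s.2) with hg
  have hPD : P ⊆ A - A := by rw [hP]; exact Finset.filter_subset _ _
  have hSmem : ∀ s ∈ S, (s.1.1 ∈ A ∧ s.1.2 ∈ A ∧ s.1.1 - s.1.2 ∈ P) ∧ s.2 ∈ A := by
    intro s hs
    simp only [hSdef, hQ, Finset.mem_product, Finset.mem_filter] at hs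
    exact ⟨⟨hs.1.1.1, hs.1.1.2, hs.1.2⟩, hs.2⟩
  have hmemS : ∀ s ∈ S, g s ∈ T := by
    intro s hs
    obtain ⟨⟨ha, hb, hab⟩, hc⟩ := hSmem s hs
    simp only [hT, Finset.mem_filter, Finset.mem_product, hg]
    exact ⟨⟨⟨Finset.sub_mem_sub ha hc, hab⟩, Finset.sub_mem_sub hb hc⟩, by ring⟩
  have hScard : S.card = ∑ t ∈ T, (S.filter (fun s => g s = t)).card :=
    Finset.card_eq_sum_card_fiberwise hmemS
  set W := (S ×ˢ S).filter (fun p => g p.1 = g p.2) with hWdef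
  have hWmem : ∀ p ∈ W, p.1 ∈ S ∧ p.2 ∈ S ∧ g p.1 = g p.2 := by
    intro p hp
    simp only [hWdef, Finset.mem_filter, Finset.mem_product] at hp
    exact ⟨hp.1.1, hp.1.2, hp.2⟩
  have hsumsq : ∑ t ∈ T, ((S.filter (fun s => g s = t)).card) ^ 2 ≤ W.card := by
    rw [Finset.card_eq_sum_card_fiberwise (f := fun p => g p.1) (t := T)
      (fun p hp => hmemS _ (hWmem p hp).1)]
    refine Finset.sum_le_sum fun t ht => ?_
    have hsub : (S.filter (fun s => g s = t)) ×ˢ (S.filter (fun s => g s = t)) ⊆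
        W.filter (fun p => g p.1 = t) := by
      intro p hp
      simp only [Finset.mem_product, Finset.mem_filter, hWdef] at hp ⊢
      exact ⟨⟨⟨hp.1.1, hp.2.1⟩, hp.1.2.trans hp.2.2.symm⟩, hp.1.2⟩
    calc (S.filter (fun s => g s = t)).card ^ 2
        = ((S.filter (fun s => g s = t)) ×ˢ (S.filter (fun s => g s = t))).card := by
          rw [Finset.card_product, sq]
      _ ≤ _ := Finset.card_le_card hsub
  have hWE : W.card ≤ E3c A := by
    rw [Finset.card_eq_sum_card_fiberwise (f := fun p => p.1.1.1 - p.2.1.1) (t := A - A)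
      (fun p hp => Finset.sub_mem_sub ((hSmem _ (hWmem p hp).1).1).1
        ((hSmem _ (hWmem p hp).2.1).1).1)]
    unfold E3c
    refine Finset.sum_le_sum fun s hs => ?_
    have key := Finset.card_le_card_of_injOn
      (f := fun p : ((ℝ × ℝ) × ℝ) × ((ℝ × ℝ) × ℝ) =>
        (((p.1.1.1, p.2.1.1), (p.1.1.2, p.2.1.2)), (p.1.2, p.2.2)))
      (s := W.filter (fun p => p.1.1.1 - p.2.1.1 = s))
      (t := (((A ×ˢ A).filter (fun q => q.1 - q.2 = s)) ×ˢ
              ((A ×ˢ A).filter (fun q => q.1 - q.2 = s))) ×ˢ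
              ((A ×ˢ A).filter (fun q => q.1 - q.2 = s)))
      (by
        intro p hp
        obtain ⟨hpW, hps⟩ := Finset.mem_filter.1 hp
        obtain ⟨hp1, hp2, hgg⟩ := hWmem p hpW
        obtain ⟨⟨ha, hb, -⟩, hc⟩ := hSmem _ hp1
        obtain ⟨⟨ha', hb', -⟩, hc'⟩ := hSmem _ hp2
        simp only [hg, Prod.mk.injEq] at hgg
        obtain ⟨⟨h1, h2⟩, h3⟩ := hgg
        simp only [Finset.mem_coe, Finset.mem_product, Finset.mem_filter]
        refine ⟨⟨⟨⟨ha, ha'⟩, hps⟩, ⟨⟨hb, hb'⟩, by linarith⟩⟩,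
          ⟨⟨hc, hc'⟩, by linarith⟩⟩)
      (by
        rintro ⟨⟨⟨a, b⟩, c⟩, ⟨⟨a', b'⟩, c'⟩⟩ - ⟨⟨⟨x, y⟩, z⟩, ⟨⟨x', y'⟩, z'⟩⟩ - h
        simp only [Prod.mk.injEq] at h ⊢
        tauto)
    calc (W.filter (fun p => p.1.1.1 - p.2.1.1 = s)).card
        ≤ _ := key
      _ = rD A s ^ 3 := by
          rw [Finset.card_product, Finset.card_product]; unfold rD; ring
  -- now real arithmetic
  have hQc : (A.card : ℝ) ^ 2 / 2 ≤ (Q.card : ℝ) := by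
    rw [hQ, Qcard A P hPD]
    rw [Nat.cast_sum]
    exact popular_sum A hA P hP
  have hScard' : (S.card : ℝ) = (Q.card : ℝ) * (A.card : ℝ) := by
    rw [hSdef, Finset.card_product]; push_cast; ring
  have hCS := sq_sum_le_card_mul_sum_sq (s := T)
    (f := fun t => ((S.filter (fun s => g s = t)).card : ℝ))
  have hScast : (S.card : ℝ) = ∑ t ∈ T, ((S.filter (fun s => g s = t)).card : ℝ) := by
    rw [hScard]; push_cast; ring
  have hsumsq' : ∑ t ∈ T, ((S.filter (fun s => g s = t)).card : ℝ) ^ 2 ≤ (W.card : ℝ) := by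
    exact_mod_cast hsumsq
  have hWE' : (W.card : ℝ) ≤ (E3c A : ℝ) := by exact_mod_cast hWE
  have hn0 : (0:ℝ) ≤ (A.card : ℝ) := Nat.cast_nonneg _
  have hT0 : (0:ℝ) ≤ (T.card : ℝ) := Nat.cast_nonneg _
  have e1 : (A.card : ℝ) ^ 3 / 2 ≤ (S.card : ℝ) := by
    rw [hScard']; nlinarith
  have e2 : (A.card : ℝ) ^ 6 / 4 ≤ (S.card : ℝ) ^ 2 := by
    have h := pow_le_pow_left₀ (by positivity : (0:ℝ) ≤ (A.card : ℝ) ^ 3 / 2) e1 2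
    calc (A.card : ℝ) ^ 6 / 4 = ((A.card : ℝ) ^ 3 / 2) ^ 2 := by ring
      _ ≤ _ := h
  have e3 : (S.card : ℝ) ^ 2 ≤ (T.card : ℝ) * (W.card : ℝ) := by
    rw [hScast]
    calc (∑ t ∈ T, ((S.filter (fun s => g s = t)).card : ℝ)) ^ 2
        ≤ (T.card : ℝ) * ∑ t ∈ T, ((S.filter (fun s => g s = t)).card : ℝ) ^ 2 := hCS
      _ ≤ (T.card : ℝ) * (W.card : ℝ) := mul_le_mul_of_nonneg_left hsumsq' hT0
  have e4 : (T.card : ℝ) * (W.card : ℝ) ≤ (E3c A : ℝ) * (T.card : ℝ) := by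
    rw [mul_comm ((T.card : ℝ))]
    exact mul_le_mul_of_nonneg_right hWE' hT0
  linarith
end
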